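/- Let V be the free ℤ-module on {1, X}. Consider the chain complex C⁰ = V⊗V⊗V → C¹ = (V⊗V) ⊕ (V⊗V) → C² = V, where d⁰ = (m₁₂ ⊗ id applied appropriately, id ⊗ m₂₃), i.e. d⁰(v) = ((m⊗id)(v), (id⊗m)(v)), and d¹(a, b) = m(a) − m(b). Then d¹ ∘ d⁰ = 0 and ker d¹ = im d⁰, i.e. the homology at the middle term vanishes. -/

import Mathlib

open TensorProduct

/-- The Khovanov Frobenius algebra `V = ℤ⟨1, X⟩` modeled as `ℤ × ℤ`
(first coordinate: coefficient of `1`, second: coefficient of `X`). -/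
abbrev V : Type := ℤ × ℤ

/-- The basis vector `1`. -/
def e1 : V := (1, 0)

/-- The basis vector `X`. -/
def eX : V := (0, 1)

/-- Khovanov multiplication: `m(1⊗1)=1, m(1⊗X)=m(X⊗1)=X, m(X⊗X)=0`. -/
noncomputable def m : V ⊗[ℤ] V →ₗ[ℤ] V :=
  TensorProduct.lift <| LinearMap.mk₂ ℤ
    (fun v w => (v.1 * w.1, v.1 * w.2 + v.2 * w.1))
    (by intro a b c; simp [Prod.ext_iff]; constructor <;> ring)
    (by intro z a b; simp [Prod.ext_iff]; constructor <;> ring)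
    (by intro a b c; simp [Prod.ext_iff]; constructor <;> ring)
    (by intro z a b; simp [Prod.ext_iff]; constructor <;> ring)

/-- Khovanov comultiplication: `Δ(1)=1⊗X+X⊗1, Δ(X)=X⊗X`. -/
noncomputable def Δ : V →ₗ[ℤ] V ⊗[ℤ] V where
  toFun v := v.1 • (e1 ⊗ₜ[ℤ] eX + eX ⊗ₜ[ℤ] e1) + v.2 • (eX ⊗ₜ[ℤ] eX)
  map_add' a b := by simp [add_smul]; abel
  map_smul' z a := by simp [mul_smul, smul_add]
/-- Degree-0 differential of the cube for the closure of `σ₁σ₂` on 3 strands: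
`v ↦ ((m ⊗ id)(v), (id ⊗ m)(v))`. -/
noncomputable def d0 : (V ⊗[ℤ] V) ⊗[ℤ] V →ₗ[ℤ] (V ⊗[ℤ] V) × (V ⊗[ℤ] V) :=
  LinearMap.prod (TensorProduct.map m LinearMap.id)
    (TensorProduct.map LinearMap.id m ∘ₗ (TensorProduct.assoc ℤ V V V).toLinearMap)

/-- Degree-1 differential: `(a, b) ↦ m(a) - m(b)`. -/
noncomputable def d1 : (V ⊗[ℤ] V) × (V ⊗[ℤ] V) →ₗ[ℤ] V :=
  m ∘ₗ LinearMap.fst ℤ (V ⊗[ℤ] V) (V ⊗[ℤ] V) -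
    m ∘ₗ LinearMap.snd ℤ (V ⊗[ℤ] V) (V ⊗[ℤ] V)


lemma m_tmul (v w : V) : m (v ⊗ₜ[ℤ] w) = (v.1 * w.1, v.1 * w.2 + v.2 * w.1) := by
  simp [m]; rfl

lemma V_eq (v : V) : v = v.1 • e1 + v.2 • eX := by
  ext <;> simp [e1, eX]

lemma exists_repr (x : V ⊗[ℤ] V) : ∃ p q r s : ℤ,
    x = p • e1 ⊗ₜ[ℤ] e1 + q • e1 ⊗ₜ[ℤ] eX + r • eX ⊗ₜ[ℤ] e1 + s • eX ⊗ₜ[ℤ] eX := by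
  induction x using TensorProduct.induction_on with
  | zero => exact ⟨0, 0, 0, 0, by simp⟩
  | tmul v w =>
    refine ⟨v.1 * w.1, v.1 * w.2, v.2 * w.1, v.2 * w.2, ?_⟩
    conv_lhs => rw [V_eq v, V_eq w]
    simp only [add_tmul, tmul_add, tmul_smul, ← smul_tmul', smul_smul]
    module
  | add x y hx hy =>
    obtain ⟨p, q, r, s, hx⟩ := hx
    obtain ⟨p', q', r', s', hy⟩ := hy
    exact ⟨p + p', q + q', r + r', s + s', by rw [hx, hy]; module⟩

lemma d1_comp_d0 : d1 ∘ₗ d0 = 0 := by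
  refine TensorProduct.ext' (g := d1 ∘ₗ d0) (h := 0) fun x w => ?_
  induction x using TensorProduct.induction_on with
  | zero => simp
  | tmul u v =>
    change m (m (u ⊗ₜ[ℤ] v) ⊗ₜ[ℤ] w) - m (u ⊗ₜ[ℤ] m (v ⊗ₜ[ℤ] w)) = 0
    simp [d0, d1, m_tmul, Prod.ext_iff]
    constructor <;> ring
  | add x y hx hy =>
    simp only [add_tmul, map_add, hx, hy, add_zero, LinearMap.zero_apply]

lemma d0_tmul' (u v w : V) :
    d0 ((u ⊗ₜ[ℤ] v) ⊗ₜ[ℤ] w) = (m (u ⊗ₜ[ℤ] v) ⊗ₜ[ℤ] w, u ⊗ₜ[ℤ] m (v ⊗ₜ[ℤ] w)) := rfl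

/-- The cube complex of the closure of `σ₁σ₂` (an unknot diagram) is a complex
with vanishing homology at the middle term. -/
theorem khovanov_sigma1_sigma2_middle_homology_trivial :
    d1 ∘ₗ d0 = 0 ∧ LinearMap.ker d1 = LinearMap.range d0 := by
  refine ⟨d1_comp_d0, ?_⟩
  ext p
  constructor
  · rintro hp
    obtain ⟨a, b⟩ := p
    obtain ⟨pa, qa, ra, sa, ha⟩ := exists_repr a
    obtain ⟨pb, qb, rb, sb, hb⟩ := exists_repr b
    subst ha hb
    simp only [LinearMap.mem_ker, d1, LinearMap.sub_apply, LinearMap.comp_apply,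
      LinearMap.fst_apply, LinearMap.snd_apply, map_add, map_smul, m_tmul] at hp
    rw [sub_eq_zero] at hp
    simp only [e1, eX, Prod.ext_iff, Prod.fst_add, Prod.snd_add, Prod.smul_mk, smul_eq_mul,
      Prod.fst_mul, Prod.mk_add_mk] at hp
    obtain ⟨h1, h2⟩ := hp
    refine ⟨pa • (e1 ⊗ₜ[ℤ] e1) ⊗ₜ[ℤ] e1 + qa • (e1 ⊗ₜ[ℤ] e1) ⊗ₜ[ℤ] eX
      + (ra - rb) • (e1 ⊗ₜ[ℤ] eX) ⊗ₜ[ℤ] e1 + rb • (eX ⊗ₜ[ℤ] e1) ⊗ₜ[ℤ] e1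
      + sa • (e1 ⊗ₜ[ℤ] eX) ⊗ₜ[ℤ] eX + sb • (eX ⊗ₜ[ℤ] eX) ⊗ₜ[ℤ] e1, ?_⟩
    simp only [d0_tmul', map_add, map_smul, LinearMap.prod_apply, Pi.prod, LinearMap.comp_apply,
      LinearEquiv.coe_coe, TensorProduct.map_tmul, TensorProduct.assoc_tmul,
      LinearMap.id_apply, m_tmul]
    ring_nf at h1 h2
    rw [Prod.ext_iff]
    constructor <;>
    · simp only [e1, eX, Prod.fst_add, Prod.snd_add, Prod.smul_fst, Prod.smul_snd,
        one_mul, mul_one, mul_zero, zero_mul, add_zero, zero_add, Prod.mk_zero_zero,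
        zero_tmul, tmul_zero, smul_zero]
      match_scalars <;> linarith
  · rintro ⟨x, rfl⟩
    simpa [LinearMap.mem_ker] using LinearMap.congr_fun d1_comp_d0 x
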